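/- Let x₁, y₁, x₂, y₂ be real polynomials, and set z₁ = x₁ + i·y₁ and z₂ = x₂ + i·y₂, complex polynomials obtained by mapping coefficients into ℂ. Assume that (x₁')² + (y₁')² = (x₂')² + (y₂')² as real polynomials and that this polynomial is nonzero, and assume that the derivatives z₁' and z₂' are associates in ℂ[X] (each divides the other, i.e. they have the same roots with the same multiplicities and the same degree). Then there exist λ ∈ ℂ with |λ| = 1 and c ∈ ℂ such that z₂ = λ·z₁ + c. -/

import Mathlib

open Polynomial

theorem uniqueness_for_fixed_splitting
    (x₁ y₁ x₂ y₂ : ℝ[X])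
    (z₁ z₂ : ℂ[X])
    (hz₁ : z₁ = x₁.map (algebraMap ℝ ℂ) + Polynomial.C Complex.I * y₁.map (algebraMap ℝ ℂ))
    (hz₂ : z₂ = x₂.map (algebraMap ℝ ℂ) + Polynomial.C Complex.I * y₂.map (algebraMap ℝ ℂ))
    (hq : derivative x₁ ^ 2 + derivative y₁ ^ 2 = derivative x₂ ^ 2 + derivative y₂ ^ 2)
    (hq0 : derivative x₁ ^ 2 + derivative y₁ ^ 2 ≠ 0)
    (hdiv : Associated (derivative z₁) (derivative z₂)) :
    ∃ (l c : ℂ), ‖l‖ = 1 ∧ z₂ = Polynomial.C l * z₁ + Polynomial.C c := by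
  obtain ⟨u, hu⟩ := hdiv
  obtain ⟨a, haU, haC⟩ := Polynomial.isUnit_iff.mp u.isUnit
  have ha0 : a ≠ 0 := haU.ne_zero
  set f := algebraMap ℝ ℂ with hf
  -- conjugation fixes real-coefficient polynomials
  have hconj : ∀ p : ℝ[X], (p.map f).map (starRingEnd ℂ) = p.map f := by
    intro p
    rw [Polynomial.map_map]
    congr 1
    ext r
    simp [hf, Complex.conj_ofReal]
  set A₁ := (derivative x₁).map f with hA₁
  set B₁ := (derivative y₁).map f with hB₁
  set A₂ := (derivative x₂).map f with hA₂
  set B₂ := (derivative y₂).map f with hB₂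
  have hdz₁ : derivative z₁ = A₁ + Polynomial.C Complex.I * B₁ := by
    rw [hz₁]; simp [derivative_map, hA₁, hB₁]
  have hdz₂ : derivative z₂ = A₂ + Polynomial.C Complex.I * B₂ := by
    rw [hz₂]; simp [derivative_map, hA₂, hB₂]
  -- the relation z₂' = C a * z₁'
  have hrel : derivative z₂ = Polynomial.C a * derivative z₁ := by
    rw [← hu, ← haC]; ring
  -- conjugated relation
  have hconjA₁ : A₁.map (starRingEnd ℂ) = A₁ := hconj _
  have hconjB₁ : B₁.map (starRingEnd ℂ) = B₁ := hconj _
  have hconjA₂ : A₂.map (starRingEnd ℂ) = A₂ := hconj _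
  have hconjB₂ : B₂.map (starRingEnd ℂ) = B₂ := hconj _
  have hw : A₂ - Polynomial.C Complex.I * B₂
      = Polynomial.C (starRingEnd ℂ a) * (A₁ - Polynomial.C Complex.I * B₁) := by
    have := congrArg (Polynomial.map (starRingEnd ℂ)) (hdz₂.symm.trans (hrel.trans (by rw [hdz₁])))
    simpa [Polynomial.map_add, Polynomial.map_mul, Polynomial.map_C, hconjA₁, hconjB₁,
      hconjA₂, hconjB₂, Complex.conj_I, mul_add, sub_eq_add_neg, mul_comm, mul_left_comm,
      mul_assoc] using this
  -- key identity: (A + iB)(A - iB) = A² + B²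
  have key : ∀ A B : ℂ[X], (A + Polynomial.C Complex.I * B) * (A - Polynomial.C Complex.I * B)
      = A ^ 2 + B ^ 2 := by
    intro A B
    have h1 : (A + Polynomial.C Complex.I * B) * (A - Polynomial.C Complex.I * B)
        = A ^ 2 - (Polynomial.C Complex.I) ^ 2 * B ^ 2 := by ring
    rw [h1, ← Polynomial.C_pow, Complex.I_sq]
    simp
  set Q : ℂ[X] := (derivative x₁ ^ 2 + derivative y₁ ^ 2).map f with hQ
  have hQ1 : Q = A₁ ^ 2 + B₁ ^ 2 := by
    simp [hQ, Polynomial.map_add, Polynomial.map_pow, hA₁, hB₁]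
  have hQ2 : Q = A₂ ^ 2 + B₂ ^ 2 := by
    rw [hQ, hq]; simp [Polynomial.map_add, Polynomial.map_pow, hA₂, hB₂]
  have hQ0 : Q ≠ 0 := by
    rw [hQ]
    exact (Polynomial.map_ne_zero_iff (by exact (algebraMap ℝ ℂ).injective)).mpr hq0
  have hfact : Q = Polynomial.C (a * starRingEnd ℂ a) * Q := by
    calc Q = A₂ ^ 2 + B₂ ^ 2 := hQ2
      _ = (A₂ + Polynomial.C Complex.I * B₂) * (A₂ - Polynomial.C Complex.I * B₂) := (key _ _).symm
      _ = (Polynomial.C a * (A₁ + Polynomial.C Complex.I * B₁)) *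
          (Polynomial.C (starRingEnd ℂ a) * (A₁ - Polynomial.C Complex.I * B₁)) := by
            rw [← hdz₂, hrel, hdz₁, hw]
      _ = Polynomial.C (a * starRingEnd ℂ a) *
          ((A₁ + Polynomial.C Complex.I * B₁) * (A₁ - Polynomial.C Complex.I * B₁)) := by
            rw [Polynomial.C_mul]; ring
      _ = Polynomial.C (a * starRingEnd ℂ a) * Q := by rw [key, ← hQ1]
  have hnorm : a * starRingEnd ℂ a = 1 := by
    have h : (Polynomial.C (a * starRingEnd ℂ a) - 1) * Q = 0 := by
      rw [sub_mul, one_mul, ← hfact, sub_self]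
    rcases mul_eq_zero.mp h with h' | h'
    · have : Polynomial.C (a * starRingEnd ℂ a) = 1 := by linear_combination h'
      have := Polynomial.C_injective (this.trans (Polynomial.C_1).symm)
      exact this
    · exact absurd h' hQ0
  have habs : ‖a‖ = 1 := by
    have h1 : Complex.normSq a = 1 := by
      have := congrArg Complex.re (Complex.mul_conj a ▸ hnorm)
      simpa using this
    rw [Complex.norm_def, h1, Real.sqrt_one]
  -- z₂ - C a * z₁ is constant
  have hder : derivative (z₂ - Polynomial.C a * z₁) = 0 := by
    rw [derivative_sub, derivative_C_mul, hrel, sub_self]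
  have hnd : (z₂ - Polynomial.C a * z₁).natDegree = 0 :=
    Polynomial.natDegree_eq_zero_of_derivative_eq_zero hder
  obtain ⟨c, hc⟩ := Polynomial.natDegree_eq_zero.mp hnd
  refine ⟨a, c, habs, ?_⟩
  linear_combination -hc
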